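/- Let z̄, μ ∈ ℝ^J with ‖z̄‖₂ ≤ 2B√J and ‖μ‖₂ ≤ 2B√J, let S, Σ be J×J symmetric matrices with S + γI positive definite (γ > 0) and Σ positive definite, and suppose ‖(S+γI)^{-1}‖_F ≤ √J/γ and ‖Σ^{-1}‖_F ≤ c̃. Then |z̄ᵀ(S + γI)^{-1} z̄ − μᵀ(Σ + γI)^{-1} μ| ≤ (√J/γ)·‖z̄‖₂²·‖Σ − S‖_F·c̃ + (‖z̄‖₂ + ‖μ‖₂)·‖z̄ − μ‖₂·c̃. -/

import Mathlib

/-- Frobenius norm of a matrix. -/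
noncomputable def frobNorm {J : ℕ} (A : Matrix (Fin J) (Fin J) ℝ) : ℝ :=
  Real.sqrt (∑ i, ∑ j, (A i j) ^ 2)

/-- Euclidean norm of a vector. -/
noncomputable def eNorm {J : ℕ} (v : Fin J → ℝ) : ℝ :=
  Real.sqrt (∑ i, (v i) ^ 2)

section Helpers

open Matrix

lemma eNorm_nonneg {J : ℕ} (v : Fin J → ℝ) : 0 ≤ eNorm v := Real.sqrt_nonneg _

lemma frobNorm_nonneg {J : ℕ} (A : Matrix (Fin J) (Fin J) ℝ) : 0 ≤ frobNorm A :=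
  Real.sqrt_nonneg _

lemma abs_dotProduct_le {J : ℕ} (v w : Fin J → ℝ) : |v ⬝ᵥ w| ≤ eNorm v * eNorm w := by
  have h := Finset.sum_mul_sq_le_sq_mul_sq Finset.univ v w
  have h2 := Real.sqrt_le_sqrt h
  rwa [Real.sqrt_sq_eq_abs, Real.sqrt_mul (by positivity)] at h2

lemma eNorm_mulVec_le {J : ℕ} (M : Matrix (Fin J) (Fin J) ℝ) (v : Fin J → ℝ) :
    eNorm (M *ᵥ v) ≤ frobNorm M * eNorm v := by
  have h : ∑ i, (M *ᵥ v) i ^ 2 ≤ (∑ i, ∑ j, (M i j) ^ 2) * ∑ j, (v j) ^ 2 := by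
    rw [Finset.sum_mul]
    exact Finset.sum_le_sum fun i _ =>
      Finset.sum_mul_sq_le_sq_mul_sq Finset.univ (fun j => M i j) v
  have h2 := Real.sqrt_le_sqrt h
  rwa [Real.sqrt_mul (by positivity)] at h2

lemma frobNorm_mul_le {J : ℕ} (A B : Matrix (Fin J) (Fin J) ℝ) :
    frobNorm (A * B) ≤ frobNorm A * frobNorm B := by
  have h : ∑ i, ∑ j, ((A * B) i j) ^ 2 ≤
      (∑ i, ∑ k, (A i k) ^ 2) * ∑ k, ∑ j, (B k j) ^ 2 := by
    have h1 : ∀ i j : Fin J, ((A * B) i j) ^ 2 ≤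
        (∑ k, (A i k) ^ 2) * ∑ k, (B k j) ^ 2 := fun i j => by
      rw [Matrix.mul_apply]
      exact Finset.sum_mul_sq_le_sq_mul_sq Finset.univ (fun k => A i k) (fun k => B k j)
    calc ∑ i, ∑ j, ((A * B) i j) ^ 2
        ≤ ∑ i, ∑ j, (∑ k, (A i k) ^ 2) * ∑ k, (B k j) ^ 2 :=
          Finset.sum_le_sum fun i _ => Finset.sum_le_sum fun j _ => h1 i j
      _ = (∑ i, ∑ k, (A i k) ^ 2) * ∑ j, ∑ k, (B k j) ^ 2 := by
          rw [Finset.sum_mul]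
          exact Finset.sum_congr rfl fun i _ => by rw [Finset.mul_sum]
      _ = (∑ i, ∑ k, (A i k) ^ 2) * ∑ k, ∑ j, (B k j) ^ 2 := by
          congr 1; exact Finset.sum_comm
  have h2 := Real.sqrt_le_sqrt h
  rwa [Real.sqrt_mul (by positivity)] at h2

lemma abs_dot_mulVec_le {J : ℕ} (v : Fin J → ℝ) (M : Matrix (Fin J) (Fin J) ℝ)
    (w : Fin J → ℝ) : |v ⬝ᵥ M *ᵥ w| ≤ eNorm v * (frobNorm M * eNorm w) :=
  le_trans (abs_dotProduct_le v (M *ᵥ w))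
    (mul_le_mul_of_nonneg_left (eNorm_mulVec_le M w) (eNorm_nonneg v))

lemma trace_nonneg_of_psd {J : ℕ} {M : Matrix (Fin J) (Fin J) ℝ}
    (hM : M.PosSemidef) : 0 ≤ M.trace := by
  rw [Matrix.trace]
  refine Finset.sum_nonneg fun i _ => ?_
  have h := hM.dotProduct_mulVec_nonneg (Pi.single i 1)
  simpa [dotProduct, Matrix.mulVec, Pi.single_apply, Finset.sum_ite_eq',
    mul_ite, ite_mul] using h

lemma trace_mul_self_of_symm {J : ℕ} {M : Matrix (Fin J) (Fin J) ℝ}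
    (hM : M.IsSymm) : (M * M).trace = ∑ i, ∑ j, (M i j) ^ 2 := by
  rw [Matrix.trace]
  refine Finset.sum_congr rfl fun i _ => ?_
  rw [Matrix.diag_apply, Matrix.mul_apply]
  refine Finset.sum_congr rfl fun j _ => ?_
  have h : M j i = M i j := (congrFun (congrFun hM j) i).symm
  rw [h, sq]

lemma smul_one_psd {J : ℕ} {γ : ℝ} (hγ : 0 < γ) :
    (γ • (1 : Matrix (Fin J) (Fin J) ℝ)).PosSemidef := by
  rw [Matrix.posSemidef_iff_dotProduct_mulVec]
  constructor
  · simp [Matrix.IsHermitian]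
  · intro x
    have h : (γ • (1 : Matrix (Fin J) (Fin J) ℝ)) *ᵥ x = γ • x := by
      simp [Matrix.smul_mulVec]
    rw [h]
    simp only [dotProduct, Pi.smul_apply, smul_eq_mul]
    refine Finset.sum_nonneg fun i _ => ?_
    have hst : star x i = x i := rfl
    rw [hst]
    nlinarith [sq_nonneg (x i), hγ.le]

lemma isSymm_of_herm {J : ℕ} {M : Matrix (Fin J) (Fin J) ℝ}
    (h : M.IsHermitian) : M.IsSymm := by
  rw [Matrix.IsSymm, ← Matrix.conjTranspose_eq_transpose_of_trivial]
  exact h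

lemma frob_resolvent_le {J : ℕ} (Sig : Matrix (Fin J) (Fin J) ℝ) (γ : ℝ) (hγ : 0 < γ)
    (hSig : Sig.PosDef) :
    frobNorm (Sig + γ • (1 : Matrix (Fin J) (Fin J) ℝ))⁻¹ ≤ frobNorm Sig⁻¹ := by
  set G := Sig + γ • (1 : Matrix (Fin J) (Fin J) ℝ) with hG
  have hSg : G.PosDef := hSig.add_posSemidef (smul_one_psd hγ)
  set C := Sig⁻¹ with hCdef
  set Bm := G⁻¹ with hBdef
  have hCpd : C.PosDef := hSig.inv
  have hBpd : Bm.PosDef := hSg.inv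
  have hdetS : IsUnit Sig.det := isUnit_iff_ne_zero.mpr hSig.det_pos.ne'
  have hdetG : IsUnit G.det := isUnit_iff_ne_zero.mpr hSg.det_pos.ne'
  have hBG : Bm * G = 1 := Matrix.nonsing_inv_mul G hdetG
  have hSC : Sig * C = 1 := Matrix.mul_nonsing_inv Sig hdetS
  have key : C - Bm = γ • (Bm * C) := by
    have h1 : (Bm * G) * C = C := by rw [hBG, Matrix.one_mul]
    have h2 : Bm * (Sig * C) = Bm := by rw [hSC, Matrix.mul_one]
    calc C - Bm = (Bm * G) * C - Bm * (Sig * C) := by rw [h1, h2]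
    _ = γ • (Bm * C) := by
        rw [hG]
        simp only [Matrix.mul_add, Matrix.add_mul, Matrix.mul_smul, Matrix.smul_mul,
          Matrix.mul_one, Matrix.one_mul, Matrix.mul_assoc]
        abel
  have key2 : C * C - Bm * Bm = (C - Bm) * C + Bm * (C - Bm) := by noncomm_ring
  have t1 : 0 ≤ (Bm * C * C).trace := by
    rw [Matrix.trace_mul_cycle]
    have hpsd := hBpd.posSemidef.mul_mul_conjTranspose_same C
    rw [hCpd.isHermitian] at hpsd
    exact trace_nonneg_of_psd hpsd
  have t2 : 0 ≤ (Bm * (Bm * C)).trace := by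
    rw [← Matrix.mul_assoc, Matrix.trace_mul_cycle, Matrix.trace_mul_cycle]
    have hpsd := hCpd.posSemidef.mul_mul_conjTranspose_same Bm
    rw [hBpd.isHermitian] at hpsd
    exact trace_nonneg_of_psd hpsd
  have etr : (C * C).trace - (Bm * Bm).trace
      = γ * ((Bm * C * C).trace + (Bm * (Bm * C)).trace) := by
    have h3 : C * C - Bm * Bm = γ • (Bm * C * C) + γ • (Bm * (Bm * C)) := by
      rw [key2, key]
      rw [Matrix.smul_mul, Matrix.mul_smul, Matrix.mul_assoc]
    have h := congrArg Matrix.trace h3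
    rw [Matrix.trace_sub, Matrix.trace_add, Matrix.trace_smul, Matrix.trace_smul] at h
    simpa [mul_add] using h
  have htr : (Bm * Bm).trace ≤ (C * C).trace := by nlinarith
  have hCs : C.IsSymm := isSymm_of_herm hCpd.isHermitian
  have hBs : Bm.IsSymm := isSymm_of_herm hBpd.isHermitian
  rw [trace_mul_self_of_symm hBs, trace_mul_self_of_symm hCs] at htr
  exact Real.sqrt_le_sqrt htr

end Helpers

open Matrix in
/-- bound on the difference of regularized quadratic forms. -/
theorem quadratic_form_difference_bound {J : ℕ}
    (zbar μ : Fin J → ℝ) (S Sig : Matrix (Fin J) (Fin J) ℝ)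
    (B c γ : ℝ) (hB : 0 < B) (hc : 0 < c) (hγ : 0 < γ)
    (hzbar : eNorm zbar ≤ 2 * B * Real.sqrt J)
    (hμ : eNorm μ ≤ 2 * B * Real.sqrt J)
    (hSsym : S.IsSymm) (hSigSym : Sig.IsSymm)
    (hSγ : (S + γ • (1 : Matrix (Fin J) (Fin J) ℝ)).PosDef)
    (hSig : Sig.PosDef)
    (hSinv : frobNorm (S + γ • (1 : Matrix (Fin J) (Fin J) ℝ))⁻¹ ≤ Real.sqrt J / γ)
    (hSiginv : frobNorm Sig⁻¹ ≤ c) :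
    |dotProduct zbar (((S + γ • (1 : Matrix (Fin J) (Fin J) ℝ))⁻¹).mulVec zbar) -
        dotProduct μ (((Sig + γ • (1 : Matrix (Fin J) (Fin J) ℝ))⁻¹).mulVec μ)| ≤
      (Real.sqrt J / γ) * eNorm zbar ^ 2 * frobNorm (Sig - S) * c +
        (eNorm zbar + eNorm μ) * eNorm (zbar - μ) * c := by
  set GS := S + γ • (1 : Matrix (Fin J) (Fin J) ℝ) with hGS
  set GSig := Sig + γ • (1 : Matrix (Fin J) (Fin J) ℝ) with hGSig
  have hSigγ : GSig.PosDef := hSig.add_posSemidef (smul_one_psd hγ)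
  set A := GS⁻¹ with hA
  set Bm := GSig⁻¹ with hBm
  have hdetGS : IsUnit GS.det := isUnit_iff_ne_zero.mpr hSγ.det_pos.ne'
  have hdetGSig : IsUnit GSig.det := isUnit_iff_ne_zero.mpr hSigγ.det_pos.ne'
  have hAGS : A * GS = 1 := Matrix.nonsing_inv_mul GS hdetGS
  have hGSigB : GSig * Bm = 1 := Matrix.mul_nonsing_inv GSig hdetGSig
  -- resolvent identity
  have hres : A - Bm = A * (Sig - S) * Bm := by
    have hdiff : Sig - S = GSig - GS := by rw [hGS, hGSig]; abel
    rw [hdiff, Matrix.mul_sub, Matrix.sub_mul, Matrix.mul_assoc A GSig Bm, hGSigB,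
      Matrix.mul_one, hAGS, Matrix.one_mul]
  -- scalar decomposition
  have hdec : zbar ⬝ᵥ A *ᵥ zbar - μ ⬝ᵥ Bm *ᵥ μ
      = zbar ⬝ᵥ (A * (Sig - S) * Bm) *ᵥ zbar + (zbar ⬝ᵥ Bm *ᵥ (zbar - μ)
        + (zbar - μ) ⬝ᵥ Bm *ᵥ μ) := by
    rw [← hres]
    simp only [Matrix.sub_mulVec, Matrix.mulVec_sub, dotProduct_sub,
      sub_dotProduct]
    ring
  -- norm bounds
  have hz0 : 0 ≤ eNorm zbar := eNorm_nonneg _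
  have hμ0 : 0 ≤ eNorm μ := eNorm_nonneg _
  have hd0 : 0 ≤ eNorm (zbar - μ) := eNorm_nonneg _
  have hΔ0 : 0 ≤ frobNorm (Sig - S) := frobNorm_nonneg _
  have hA0 : 0 ≤ frobNorm A := frobNorm_nonneg _
  have hB0 : 0 ≤ frobNorm Bm := frobNorm_nonneg _
  have hBc : frobNorm Bm ≤ c := le_trans (frob_resolvent_le Sig γ hγ hSig) hSiginv
  have hfrob : frobNorm (A * (Sig - S) * Bm)
      ≤ (Real.sqrt J / γ) * frobNorm (Sig - S) * c := by
    calc frobNorm (A * (Sig - S) * Bm)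
        ≤ frobNorm (A * (Sig - S)) * frobNorm Bm := frobNorm_mul_le _ _
      _ ≤ frobNorm A * frobNorm (Sig - S) * frobNorm Bm := by
          have := frobNorm_mul_le A (Sig - S)
          exact mul_le_mul_of_nonneg_right this hB0
      _ ≤ (Real.sqrt J / γ) * frobNorm (Sig - S) * c := by
          have h1 : frobNorm A * frobNorm (Sig - S) ≤ (Real.sqrt J / γ) * frobNorm (Sig - S) :=
            mul_le_mul_of_nonneg_right hSinv hΔ0
          have h2 : 0 ≤ (Real.sqrt J / γ) * frobNorm (Sig - S) := le_trans (by positivity) h1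
          exact mul_le_mul (h1) hBc hB0 (le_trans (mul_nonneg hA0 hΔ0) h1)
  have b1 : |zbar ⬝ᵥ (A * (Sig - S) * Bm) *ᵥ zbar|
      ≤ (Real.sqrt J / γ) * eNorm zbar ^ 2 * frobNorm (Sig - S) * c := by
    calc |zbar ⬝ᵥ (A * (Sig - S) * Bm) *ᵥ zbar|
        ≤ eNorm zbar * (frobNorm (A * (Sig - S) * Bm) * eNorm zbar) :=
          abs_dot_mulVec_le _ _ _
      _ ≤ eNorm zbar * (((Real.sqrt J / γ) * frobNorm (Sig - S) * c) * eNorm zbar) := by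
          apply mul_le_mul_of_nonneg_left _ hz0
          exact mul_le_mul_of_nonneg_right hfrob hz0
      _ = (Real.sqrt J / γ) * eNorm zbar ^ 2 * frobNorm (Sig - S) * c := by ring
  have b2 : |zbar ⬝ᵥ Bm *ᵥ (zbar - μ)| ≤ eNorm zbar * (c * eNorm (zbar - μ)) := by
    refine le_trans (abs_dot_mulVec_le _ _ _) ?_
    exact mul_le_mul_of_nonneg_left (mul_le_mul_of_nonneg_right hBc hd0) hz0
  have b3 : |(zbar - μ) ⬝ᵥ Bm *ᵥ μ| ≤ eNorm (zbar - μ) * (c * eNorm μ) := by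
    refine le_trans (abs_dot_mulVec_le _ _ _) ?_
    exact mul_le_mul_of_nonneg_left (mul_le_mul_of_nonneg_right hBc hμ0) hd0
  have tri : |zbar ⬝ᵥ A *ᵥ zbar - μ ⬝ᵥ Bm *ᵥ μ|
      ≤ |zbar ⬝ᵥ (A * (Sig - S) * Bm) *ᵥ zbar| + (|zbar ⬝ᵥ Bm *ᵥ (zbar - μ)|
        + |(zbar - μ) ⬝ᵥ Bm *ᵥ μ|) := by
    rw [hdec]
    exact le_trans (abs_add_le _ _) (by gcongr; exact abs_add_le _ _)
  calc |zbar ⬝ᵥ A *ᵥ zbar - μ ⬝ᵥ Bm *ᵥ μ| ≤ _ := tri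
    _ ≤ (Real.sqrt J / γ) * eNorm zbar ^ 2 * frobNorm (Sig - S) * c +
        (eNorm zbar * (c * eNorm (zbar - μ)) + eNorm (zbar - μ) * (c * eNorm μ)) := by
        gcongr
    _ = (Real.sqrt J / γ) * eNorm zbar ^ 2 * frobNorm (Sig - S) * c +
        (eNorm zbar + eNorm μ) * eNorm (zbar - μ) * c := by ring
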